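/- Let f be a monotone submodular function with f(∅) = 0 on finite Ω, S_i the greedy set after i steps, and S* an optimal set of size k. Defining δᵢ = f(S*) - f(Sᵢ), the greedy recursion δ_{i+1} ≤ (1 - 1/k) δᵢ holds, and hence δ_k ≤ (1 - 1/k)^k δ₀ ≤ e^{-1} f(S*). -/

import Mathlib

open Finset

lemma greedy_telescope {Ω : Type*} [DecidableEq Ω] (f : Finset Ω → ℝ)
    (hmono : ∀ X Y : Finset Ω, X ⊆ Y → f X ≤ f Y)
    (hsub : ∀ X Y : Finset Ω, X ⊆ Y → ∀ v ∉ Y,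
      f (insert v X) - f X ≥ f (insert v Y) - f Y)
    (A B : Finset Ω) :
    f (B ∪ A) - f B ≤ ∑ v ∈ A, (f (insert v B) - f B) := by
  induction A using Finset.induction_on with
  | empty => simp
  | insert _ _ ha ih =>
    rename_i a A'
    rw [Finset.sum_insert ha, Finset.union_insert]
    by_cases haS : a ∈ B ∪ A'
    · rw [Finset.insert_eq_self.mpr haS]
      have h0 : 0 ≤ f (insert a B) - f B :=
        sub_nonneg.2 (hmono _ _ (Finset.subset_insert a B))
      linarith
    · have h := hsub B (B ∪ A') Finset.subset_union_left a haS
      linarith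

theorem greedy_recursion {Ω : Type*} [Fintype Ω] [DecidableEq Ω]
    (f : Finset Ω → ℝ)
    (hnonneg : ∀ S : Finset Ω, 0 ≤ f S)
    (hmono : ∀ X Y : Finset Ω, X ⊆ Y → f X ≤ f Y)
    (hsub : ∀ X Y : Finset Ω, X ⊆ Y → ∀ v ∉ Y,
      f (insert v X) - f X ≥ f (insert v Y) - f Y)
    (hempty : f ∅ = 0)
    (k : ℕ) (hk : 1 ≤ k) (hcard : k ≤ Fintype.card Ω)
    (S : ℕ → Finset Ω) (hS0 : S 0 = ∅)
    (hgreedy : ∀ i < k, ∃ v ∉ S i, S (i + 1) = insert v (S i) ∧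
      ∀ w ∉ S i, f (insert w (S i)) - f (S i) ≤ f (insert v (S i)) - f (S i))
    (Sstar : Finset Ω) (hSstar_card : Sstar.card = k)
    (hopt : ∀ T : Finset Ω, T.card = k → f T ≤ f Sstar)
    (δ : ℕ → ℝ) (hδ : ∀ i, δ i = f Sstar - f (S i)) :
    (∀ i < k, δ (i + 1) ≤ (1 - 1 / (k : ℝ)) * δ i) ∧
    δ k ≤ (1 - 1 / (k : ℝ)) ^ k * δ 0 ∧
    (1 - 1 / (k : ℝ)) ^ k * δ 0 ≤ f Sstar / Real.exp 1 := by
  have hkpos : (0:ℝ) < (k:ℝ) := by exact_mod_cast hk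
  have hk1 : (1:ℝ) ≤ (k:ℝ) := by exact_mod_cast hk
  have hfac0 : 0 ≤ 1 - 1 / (k:ℝ) := by
    rw [sub_nonneg]
    exact div_le_one_of_le₀ hk1 (le_of_lt hkpos)
  have key : ∀ i < k, δ (i + 1) ≤ (1 - 1 / (k : ℝ)) * δ i := by
    intro i hi
    obtain ⟨v, hv, hSi1, hmax⟩ := hgreedy i hi
    set g := f (insert v (S i)) - f (S i) with hg
    have hg0 : 0 ≤ g := sub_nonneg.2 (hmono _ _ (Finset.subset_insert _ _))
    have hsumle : ∑ w ∈ Sstar, (f (insert w (S i)) - f (S i)) ≤ (k:ℝ) * g := by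
      calc ∑ w ∈ Sstar, (f (insert w (S i)) - f (S i))
          ≤ ∑ _w ∈ Sstar, g := by
            apply Finset.sum_le_sum
            intro w _
            by_cases hw : w ∈ S i
            · rw [Finset.insert_eq_self.mpr hw]; simpa using hg0
            · exact hmax w hw
        _ = (k:ℝ) * g := by
            rw [Finset.sum_const, hSstar_card, nsmul_eq_mul]
    have htel := greedy_telescope f hmono hsub Sstar (S i)
    have hstar : f Sstar ≤ f (S i ∪ Sstar) := hmono _ _ Finset.subset_union_right
    set d := f Sstar - f (S i) with hd
    have hdle : d ≤ (k:ℝ) * g := by linarith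
    have h1 : d / (k:ℝ) ≤ g := (div_le_iff₀ hkpos).2 (by linarith)
    have h2 : (1 - 1 / (k:ℝ)) * d = d - d / (k:ℝ) := by ring
    rw [hδ (i+1), hδ i, hSi1]
    have : f (insert v (S i)) = f (S i) + g := by rw [hg]; ring
    rw [this]
    rw [← hd] at *
    linarith
  have hpow : ∀ i, i ≤ k → δ i ≤ (1 - 1 / (k:ℝ)) ^ i * δ 0 := by
    intro i
    induction i with
    | zero => intro _; simp
    | succ n ih =>
      intro h
      have hn : n < k := h
      calc δ (n + 1) ≤ (1 - 1 / (k:ℝ)) * δ n := key n hn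
        _ ≤ (1 - 1 / (k:ℝ)) * ((1 - 1 / (k:ℝ)) ^ n * δ 0) :=
            mul_le_mul_of_nonneg_left (ih (le_of_lt hn)) hfac0
        _ = (1 - 1 / (k:ℝ)) ^ (n + 1) * δ 0 := by ring
  refine ⟨key, hpow k le_rfl, ?_⟩
  have hδ0 : δ 0 = f Sstar := by rw [hδ, hS0, hempty]; ring
  have h1 : 1 - 1 / (k:ℝ) ≤ Real.exp (-(1 / (k:ℝ))) := by
    linarith [Real.add_one_le_exp (-(1 / (k:ℝ)))]
  have h2 : (1 - 1 / (k:ℝ)) ^ k ≤ Real.exp (-(1 / (k:ℝ))) ^ k :=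
    pow_le_pow_left₀ hfac0 h1 k
  have h3 : Real.exp (-(1 / (k:ℝ))) ^ k = Real.exp (-1) := by
    rw [← Real.exp_nat_mul]
    congr 1
    field_simp
  have h4 : Real.exp (-1) = 1 / Real.exp 1 := by
    rw [Real.exp_neg]; ring
  rw [hδ0]
  calc (1 - 1 / (k:ℝ)) ^ k * f Sstar
      ≤ Real.exp (-1) * f Sstar := by
        apply mul_le_mul_of_nonneg_right _ (hnonneg Sstar)
        rw [← h3]; exact h2
    _ = f Sstar / Real.exp 1 := by rw [h4]; ring
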